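/- Let M be a commutative binoid and K a commutative ring. The map sending a binoid homomorphism p : M → K to the induced K-algebra homomorphism K[M] → K (determined on the quotient of the monoid algebra by sending the class of the basis element single(m, 1) to p(m)) is a well-defined bijection between the set MonoidWithZeroHom M K and the set of K-algebra homomorphisms K[M] → K. -/

import Mathlib

/-- The binoid algebra `K[M]`: the quotient of the monoid algebra of `M` over `K` by the
ideal generated by the basis element `single (0 : M) (1 : K)` corresponding to the
absorbing element of `M`. -/
abbrev binoidAlgebra (K M : Type*) [CommRing K] [CommMonoidWithZero M] :=
  MonoidAlgebra K M ⧸ Ideal.span {MonoidAlgebra.of K M (0 : M)}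

/-- The map sending a binoid homomorphism `p : M → K` to the induced
`K`-algebra homomorphism `K[M] → K` (determined by sending the class of the basis
element `single (m, 1)` to `p m`) is a well-defined bijection between
`MonoidWithZeroHom M K` and the set of `K`-algebra homomorphisms `K[M] → K`. -/
theorem binoidHom_equiv_algHom {K M : Type*} [CommRing K] [CommMonoidWithZero M] :
    ∃ Φ : MonoidWithZeroHom M K → (binoidAlgebra K M →ₐ[K] K),
      (∀ (p : MonoidWithZeroHom M K) (m : M),
        Φ p (Ideal.Quotient.mk _ (MonoidAlgebra.of K M m)) = p m) ∧
      Function.Bijective Φ := by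
  set I : Ideal (MonoidAlgebra K M) := Ideal.span {MonoidAlgebra.of K M (0 : M)} with hI
  have key : ∀ p : MonoidWithZeroHom M K, ∀ a ∈ I,
      (MonoidAlgebra.lift K K M p.toMonoidHom) a = 0 := by
    intro p a ha
    rw [hI, Ideal.mem_span_singleton] at ha
    obtain ⟨c, rfl⟩ := ha
    simp [p.map_zero]
  set Φ : MonoidWithZeroHom M K → (binoidAlgebra K M →ₐ[K] K) :=
    fun p => Ideal.Quotient.liftₐ I (MonoidAlgebra.lift K K M p.toMonoidHom) (key p) with hΦ
  have hmain : ∀ (p : MonoidWithZeroHom M K) (m : M),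
      Φ p (Ideal.Quotient.mk I (MonoidAlgebra.of K M m)) = p m := by
    intro p m
    rw [hΦ]
    show (MonoidAlgebra.lift K K M p.toMonoidHom) (MonoidAlgebra.of K M m) = p m
    simp
  refine ⟨Φ, hmain, ?_, ?_⟩
  · intro p q h
    ext m
    rw [← hmain p m, ← hmain q m, h]
  · intro φ
    have h0 : (MonoidAlgebra.of K M (0 : M) : MonoidAlgebra K M) ∈ I :=
      Ideal.subset_span rfl
    refine ⟨{ toFun := fun m => φ (Ideal.Quotient.mk I (MonoidAlgebra.of K M m)),
              map_zero' := by
                show φ (Ideal.Quotient.mk I (MonoidAlgebra.of K M 0)) = 0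
                rw [Ideal.Quotient.eq_zero_iff_mem.mpr h0, map_zero],
              map_one' := by
                show φ (Ideal.Quotient.mk I (MonoidAlgebra.of K M 1)) = 1
                rw [map_one, map_one, map_one],
              map_mul' := fun a b => by simp [← map_mul] }, ?_⟩
    apply Ideal.Quotient.algHom_ext
    apply MonoidAlgebra.algHom_ext
    intro m
    show Φ _ (Ideal.Quotient.mk I (MonoidAlgebra.of K M m)) = _
    rw [hmain]
    rfl
    exact Subsingleton.elim _ _
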